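/- arXiv:2109.12705 — 2 statements merged into one kernel-verified Lean document; each statement's English description precedes it below -/
import Mathlib

section
/- For every integer n ≥ 2, the sum over k from 0 to ⌊n/2⌋ of (2k)! · S(n,2k+1) equals B(n-1). -/
open Finset

/-- Stirling numbers of the second kind. -/
def S : ℕ → ℕ → ℕ
  | 0, 0 => 1
  | 0, _ + 1 => 0
  | _ + 1, 0 => 0
  | n + 1, k + 1 => (k + 1) * S n (k + 1) + S n k

/-- Ordered Bell (Fubini) numbers. -/
def B (n : ℕ) : ℕ := ∑ k ∈ range (n + 1), k.factorial * S n k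

lemma S_eq_zero : ∀ n k, n < k → S n k = 0 := by
  intro n
  induction n with
  | zero => intro k hk; cases k with
    | zero => omega
    | succ j => rfl
  | succ m ih =>
    intro k hk
    cases k with
    | zero => omega
    | succ j =>
      show (j + 1) * S m (j + 1) + S m j = 0
      rw [ih (j+1) (by omega), ih j (by omega)]
      ring

lemma parity_split (f : ℕ → ℕ) : ∀ n, ∑ k ∈ range n, f k =
    (∑ k ∈ range ((n+1)/2), f (2*k)) + ∑ k ∈ range (n/2), f (2*k+1) := by
  intro n
  induction n with
  | zero => simp
  | succ m ih =>
    rw [Finset.sum_range_succ, ih]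
    rcases Nat.even_or_odd m with ⟨t, ht⟩ | ⟨t, ht⟩
    · have h1 : (m+1+1)/2 = t + 1 := by omega
      have h2 : (m+1)/2 = t := by omega
      have h3 : m/2 = t := by omega
      rw [h1, h2, h3, Finset.sum_range_succ]
      have : 2 * t = m := by omega
      rw [this]; ring
    · have h1 : (m+1+1)/2 = t + 1 := by omega
      have h2 : (m+1)/2 = t + 1 := by omega
      have h3 : m/2 = t := by omega
      rw [h1, h2, h3, Finset.sum_range_succ (fun k => f (2*k+1)) t]
      have : 2 * t + 1 = m := by omega
      rw [this]; ring

theorem stmt1 (n : ℕ) (hn : 2 ≤ n) :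
    ∑ k ∈ range (n / 2 + 1), (2 * k).factorial * S n (2 * k + 1) = B (n - 1) := by
  obtain ⟨m, rfl⟩ : ∃ m, n = m + 1 := ⟨n - 1, by omega⟩
  simp only [Nat.add_sub_cancel]
  set N := (m + 1) / 2 + 1 with hN
  have key : ∀ k, S (m+1) (2*k+1) = (2*k+1) * S m (2*k+1) + S m (2*k) := by
    intro k; rfl
  have lhs_eq : ∑ k ∈ range N, (2 * k).factorial * S (m+1) (2 * k + 1)
      = (∑ k ∈ range N, (2*k+1).factorial * S m (2*k+1))
        + ∑ k ∈ range N, (2*k).factorial * S m (2*k) := by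
    rw [← Finset.sum_add_distrib]
    apply Finset.sum_congr rfl
    intro k _
    rw [key k, Nat.factorial_succ]
    ring
  rw [lhs_eq, B, parity_split (fun k => k.factorial * S m k) (m+1)]
  have heven : ∑ k ∈ range ((m+1+1)/2), (2*k).factorial * S m (2*k)
      = ∑ k ∈ range N, (2*k).factorial * S m (2*k) := by
    apply Finset.sum_subset
    · apply Finset.range_subset_range.2; omega
    · intro k _ hk
      simp only [Finset.mem_range, not_lt] at hk
      rw [S_eq_zero m (2*k) (by omega)]
      ring
  have hodd : ∑ k ∈ range ((m+1)/2), (2*k+1).factorial * S m (2*k+1)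
      = ∑ k ∈ range N, (2*k+1).factorial * S m (2*k+1) := by
    apply Finset.sum_subset
    · apply Finset.range_subset_range.2; omega
    · intro k _ hk
      simp only [Finset.mem_range, not_lt] at hk
      rw [S_eq_zero m (2*k+1) (by omega)]
      ring
  rw [← heven, ← hodd]
  ring
end

section
/- For every integer n ≥ 1, B(n) = (-1)^{n} + 2·Σ_{k=0}^{⌊n/2⌋} (2k+1)!·S(n,2k+1). -/
open Finset

lemma S_zero : ∀ n k : ℕ, n < k → S n k = 0 := by
  intro n
  induction n with
  | zero => intro k hk; cases k with
    | zero => omega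
    | succ k => rfl
  | succ n ih =>
    intro k hk
    cases k with
    | zero => omega
    | succ k =>
      have h1 : S n (k+1) = 0 := ih (k+1) (by omega)
      have h2 : S n k = 0 := ih k (by omega)
      show (k + 1) * S n (k + 1) + S n k = 0
      rw [h1, h2]; ring

lemma alt (n : ℕ) :
    ∑ k ∈ range (n+1), ((-1:ℤ)^k * k.factorial * S n k) = (-1)^n := by
  induction n with
  | zero => simp [S]
  | succ n ih =>
    have key : ∀ j : ℕ, ((-1:ℤ)^(j+1) * (j+1).factorial * S (n+1) (j+1))
        = (((-1:ℤ)^(j+1) * (j+1).factorial * ((j+1 : ℕ) : ℤ) * S n (j+1))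
            - ((-1:ℤ)^j * j.factorial * ((j : ℕ) : ℤ) * S n j))
          - (-1:ℤ)^j * j.factorial * S n j := by
      intro j
      have : S (n+1) (j+1) = (j + 1) * S n (j + 1) + S n j := rfl
      rw [this, Nat.factorial_succ]
      push_cast
      ring
    rw [Finset.sum_range_succ']
    have h0 : ((-1:ℤ)^0 * Nat.factorial 0 * S (n+1) 0) = 0 := by
      simp [S]
    rw [h0, add_zero]
    calc ∑ j ∈ range (n+1), ((-1:ℤ)^(j+1) * (j+1).factorial * S (n+1) (j+1))
        = ∑ j ∈ range (n+1),
            ((((-1:ℤ)^(j+1) * (j+1).factorial * ((j+1 : ℕ) : ℤ) * S n (j+1))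
              - ((-1:ℤ)^j * j.factorial * ((j : ℕ) : ℤ) * S n j))
            - (-1:ℤ)^j * j.factorial * S n j) := by
          exact Finset.sum_congr rfl fun j _ => key j
      _ = (((-1:ℤ)^(n+1) * (n+1).factorial * (((n+1 : ℕ)) : ℤ) * S n (n+1))
            - ((-1:ℤ)^0 * Nat.factorial 0 * ((0:ℕ) : ℤ) * S n 0))
          - ∑ j ∈ range (n+1), ((-1:ℤ)^j * j.factorial * S n j) := by
          rw [Finset.sum_sub_distrib, Finset.sum_range_sub
            (f := fun k => (-1:ℤ)^k * k.factorial * ((k:ℕ):ℤ) * S n k)]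
      _ = (-1)^(n+1) := by
          rw [ih, S_zero n (n+1) (by omega)]
          push_cast
          ring

lemma pair (n m : ℕ) :
    ∑ k ∈ range (2*m), ((1 - (-1:ℤ)^k) * k.factorial * S n k)
      = 2 * ∑ j ∈ range m, ((2*j+1).factorial * S n (2*j+1) : ℤ) := by
  induction m with
  | zero => simp
  | succ m ih =>
    have h2 : 2*(m+1) = (2*m+1)+1 := by ring
    rw [h2, Finset.sum_range_succ, Finset.sum_range_succ, ih, Finset.sum_range_succ]
    have he : ((-1:ℤ)^(2*m)) = 1 := by
      rw [pow_mul]; norm_num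
    have ho : ((-1:ℤ)^(2*m+1)) = -1 := by
      rw [pow_succ, he]; ring
    rw [he, ho]
    ring

theorem stmt4 (n : ℕ) (hn : 1 ≤ n) :
    (B n : ℤ) = (-1) ^ n +
      2 * ∑ k ∈ range (n / 2 + 1), ((2 * k + 1).factorial * S n (2 * k + 1) : ℤ) := by
  set N := 2 * (n / 2 + 1) with hN
  have hnN : n + 1 ≤ N := by omega
  have hsub : range (n+1) ⊆ range N := by
    intro x hx; simp only [mem_range] at *; omega
  have hzero : ∀ x ∈ range N, x ∉ range (n+1) →
      ((-1:ℤ)^x * x.factorial * S n x) = 0 := by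
    intro x _ hx
    simp only [mem_range] at hx
    rw [S_zero n x (by omega)]
    push_cast; ring
  have hzero2 : ∀ x ∈ range N, x ∉ range (n+1) →
      ((x.factorial : ℤ) * S n x) = 0 := by
    intro x _ hx
    simp only [mem_range] at hx
    rw [S_zero n x (by omega)]
    push_cast; ring
  have hB : (B n : ℤ) = ∑ k ∈ range N, ((k.factorial : ℤ) * S n k) := by
    rw [← Finset.sum_subset hsub hzero2]
    unfold B
    push_cast
    rfl
  have hA : ∑ k ∈ range N, ((-1:ℤ)^k * k.factorial * S n k) = (-1)^n := by
    rw [← Finset.sum_subset hsub hzero, alt]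
  have hP := pair n (n / 2 + 1)
  have hsplit : ∑ k ∈ range N, ((1 - (-1:ℤ)^k) * k.factorial * S n k)
      = (B n : ℤ) - ∑ k ∈ range N, ((-1:ℤ)^k * k.factorial * S n k) := by
    rw [hB, ← Finset.sum_sub_distrib]
    exact Finset.sum_congr rfl fun k _ => by ring
  rw [hA] at hsplit
  rw [← hN] at hP
  rw [hP] at hsplit
  linarith
end
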